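/- Let n : ℕ and let F : (Fin n → Bool) → ℕ satisfy: for every s : Fin n → Bool and every i : Fin n, either F (Function.update s i (¬ s i)) = F s + 1 or F s = F (Function.update s i (¬ s i)) + 1 (flipping a single coordinate changes F by exactly one). Define P := Σ over all s : Fin n → Bool of A^{2·(card {i | s i = true}) − n} · (−A² − A^{−2})^{F s} in the Laurent polynomial ring ℤ[A, A⁻¹]. Then for any integers k and l at which P has nonzero coefficient, k ≡ l (mod 4). (This is the abstract form of the claim that all exponents in the Kauffman state sum of a classical link diagram are congruent modulo 4, since for a classical diagram the number of components of a smoothing changes by exactly one whenever a single marker is changed.) -/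

import Mathlib

open LaurentPolynomial Finset

private def Good (c : ℤ) (p : LaurentPolynomial ℤ) : Prop :=
  ∀ k : ℤ, p.coeff k ≠ 0 → k ≡ c [ZMOD 4]

private lemma good_congr {c c' : ℤ} {p : LaurentPolynomial ℤ} (h : Good c p)
    (hc : c ≡ c' [ZMOD 4]) : Good c' p := fun k hk => (h k hk).trans hc

private lemma good_T (a : ℤ) : Good a (T a) := by
  intro k hk
  have hka : k = a := by
    by_contra hne
    apply hk
    rw [T_apply]
    simp [Finsupp.single_apply, Ne.symm hne]
  simp [hka]

private lemma good_add {c : ℤ} {p q : LaurentPolynomial ℤ} (hp : Good c p)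
    (hq : Good c q) : Good c (p + q) := by
  intro k hk
  have hpq : (p + q).coeff k = p.coeff k + q.coeff k := by
    rw [AddMonoidAlgebra.coeff_add, Finsupp.add_apply]
  rw [hpq] at hk
  by_cases h1 : p.coeff k = 0
  · exact hq k (by simpa [h1] using hk)
  · exact hp k h1

private lemma good_mul {a b : ℤ} {p q : LaurentPolynomial ℤ} (hp : Good a p)
    (hq : Good b q) : Good (a + b) (p * q) := by
  intro k hk
  have hk' : k ∈ (p * q).coeff.support := Finsupp.mem_support_iff.2 hk
  have hmem := AddMonoidAlgebra.support_coeff_mul_subset p q hk'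
  rw [Finset.mem_add] at hmem
  obtain ⟨x, hx, y, hy, rfl⟩ := hmem
  exact (hp x (Finsupp.mem_support_iff.1 hx)).add (hq y (Finsupp.mem_support_iff.1 hy))

private lemma good_one : Good 0 (1 : LaurentPolynomial ℤ) := by
  have h := good_T 0
  rwa [T_zero] at h

private lemma good_pow {a : ℤ} {p : LaurentPolynomial ℤ} (hp : Good a p) :
    ∀ m : ℕ, Good ((m : ℤ) * a) (p ^ m)
  | 0 => by simpa using good_one
  | (m + 1) => by
    have h := good_mul (good_pow hp m) hp
    rw [← pow_succ] at h
    have he : ((m : ℤ) * a + a) = ((m + 1 : ℕ) : ℤ) * a := by push_cast; ring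
    rwa [he] at h

private lemma good_sum {ι : Type*} [DecidableEq ι] (t : Finset ι) (f : ι → LaurentPolynomial ℤ) (c : ℤ)
    (h : ∀ i ∈ t, Good c (f i)) : Good c (∑ i ∈ t, f i) := by
  induction t using Finset.induction with
  | empty => intro k hk; simp at hk
  | insert _ _ hni ih =>
    rw [Finset.sum_insert hni]
    exact good_add (h _ (Finset.mem_insert_self _ _))
      (ih fun i hi => h i (Finset.mem_insert_of_mem hi))

private lemma good_q : Good 2 (-(T 2) - T (-2) : LaurentPolynomial ℤ) := by
  intro k hk
  have hrw : (-(T 2) - T (-2) : LaurentPolynomial ℤ) = -((T 2) + T (-2)) := by ring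
  rw [hrw] at hk
  have h2 : k = 2 ∨ k = -2 := by
    by_contra h
    push_neg at h
    apply hk
    have hneg : (-((T 2) + T (-2)) : LaurentPolynomial ℤ).coeff k
        = -((((T 2) + T (-2)) : LaurentPolynomial ℤ).coeff k) := by
      rw [AddMonoidAlgebra.coeff_neg, Finsupp.neg_apply]
    have hadd : (((T 2) + T (-2)) : LaurentPolynomial ℤ).coeff k
        = (T 2 : LaurentPolynomial ℤ).coeff k + (T (-2) : LaurentPolynomial ℤ).coeff k := by
      rw [AddMonoidAlgebra.coeff_add, Finsupp.add_apply]
    have e1 : (T 2 : LaurentPolynomial ℤ).coeff k = 0 := by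
      rw [T_apply]
      simp [Finsupp.single_apply, Ne.symm h.1]
    have e2 : (T (-2) : LaurentPolynomial ℤ).coeff k = 0 := by
      rw [T_apply]
      simp [Finsupp.single_apply, Ne.symm h.2]
    rw [hneg, hadd, e1, e2]
    ring
  rcases h2 with rfl | rfl <;> decide

private lemma invariant (n : ℕ) (F : (Fin n → Bool) → ℕ)
    (hF : ∀ (s : Fin n → Bool) (i : Fin n),
      F (Function.update s i (!(s i))) = F s + 1 ∨
        F s = F (Function.update s i (!(s i))) + 1) :
    ∀ s : Fin n → Bool,
      (2 * (((univ.filter fun i => s i = true).card : ℤ)) + 2 * (F s : ℤ))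
        ≡ (2 * (F (fun _ => false) : ℤ)) [ZMOD 4] := by
  suffices H : ∀ (m : ℕ) (s : Fin n → Bool),
      (univ.filter fun i => s i = true).card = m →
      (2 * (((univ.filter fun i => s i = true).card : ℤ)) + 2 * (F s : ℤ))
        ≡ (2 * (F (fun _ => false) : ℤ)) [ZMOD 4] by
    intro s; exact H _ s rfl
  intro m
  induction m with
  | zero =>
    intro s hm
    have hs : s = fun _ => false := by
      funext j
      by_contra h
      have hj : j ∈ univ.filter fun i => s i = true := by
        simp only [Finset.mem_filter, Finset.mem_univ, true_and]
        simpa using h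
      rw [Finset.card_eq_zero] at hm
      rw [hm] at hj
      exact absurd hj (Finset.notMem_empty j)
    subst hs
    rw [hm]
    simp [Int.ModEq]
  | succ m ih =>
    intro s hm
    have hne : (univ.filter fun i => s i = true).Nonempty := by
      rw [← Finset.card_pos, hm]; omega
    obtain ⟨i, hi⟩ := hne
    have hsi : s i = true := by simpa using hi
    set s' := Function.update s i false with hs'
    have hupd : Function.update s' i (!(s' i)) = s := by
      funext j
      by_cases hj : j = i
      · subst hj; simp [s', hsi]
      · simp [s', Function.update_of_ne hj]
    have hcard : (univ.filter fun j => s' j = true) =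
        (univ.filter fun j => s j = true).erase i := by
      ext j
      by_cases hj : j = i
      · subst hj; simp [s']
      · simp [s', Function.update_of_ne hj, hj]
    have hm' : (univ.filter fun j => s' j = true).card = m := by
      rw [hcard, Finset.card_erase_of_mem hi, hm]; omega
    have ihs' := ih s' hm'
    rw [hm'] at ihs'
    have hF' := hF s' i
    rw [hupd] at hF'
    rw [hm]
    unfold Int.ModEq at ihs' ⊢
    rcases hF' with h | h <;> omega

/-- Abstract form of the congruence-mod-4 property of the Kauffman state sum of a
classical link diagram: if `F : (Fin n → Bool) → ℕ` changes by exactly one whenever a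
single coordinate of its argument is flipped (as the number of components of a
smoothing does when one marker is changed), then all exponents of nonzero monomials
of the state sum `P = Σ_s A^(2·#{i | s i} − n) · (−A² − A⁻²)^(F s)` are congruent
modulo 4. -/
theorem stateSum_exponents_mod_four
    (n : ℕ) (F : (Fin n → Bool) → ℕ)
    (hF : ∀ (s : Fin n → Bool) (i : Fin n),
      F (Function.update s i (!(s i))) = F s + 1 ∨
        F s = F (Function.update s i (!(s i))) + 1)
    (P : LaurentPolynomial ℤ)
    (hP : P = ∑ s : Fin n → Bool,
      T (2 * (((Finset.univ.filter fun i => s i = true).card : ℤ)) - (n : ℤ)) *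
        (-(T 2) - T (-2)) ^ F s)
    (k l : ℤ) (hk : P.coeff k ≠ 0) (hl : P.coeff l ≠ 0) :
    k ≡ l [ZMOD 4] := by
  have key : Good (2 * (F (fun _ => false) : ℤ) - (n : ℤ)) P := by
    rw [hP]
    apply good_sum
    intro s _
    have h1 := good_T (2 * (((univ.filter fun i => s i = true).card : ℤ)) - (n : ℤ))
    have h2 := good_pow good_q (F s)
    have h3 := good_mul h1 h2
    apply good_congr h3
    have hinv := invariant n F hF s
    unfold Int.ModEq at hinv ⊢
    omega
  exact (key k hk).trans (key l hl).symm
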